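/- arXiv:2111.13971 — 7 statements merged into one kernel-verified Lean document; each statement's English description precedes it below -/
import Mathlib

section
/- Let n ≥ 3 be an odd integer and set r = (1/2)·(tan(π/n)·tan(π/(2n)))/(tan(π/n) − tan(π/(2n))). Then for every integer i with 1 ≤ i ≤ n−1, one has 2r·(1/tan(iπ/n) − 1/tan(π/n)) = sin((1−i)π/n)/sin(iπ/n). -/
open Real

theorem stmt_0 (n : ℕ) (hn : 3 ≤ n) (hodd : Odd n)
    (r : ℝ)
    (hr : r = (1 / 2) * (Real.tan (π / n) * Real.tan (π / (2 * n))) /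
      (Real.tan (π / n) - Real.tan (π / (2 * n))))
    (i : ℕ) (hi1 : 1 ≤ i) (hi2 : i ≤ n - 1) :
    2 * r * (1 / Real.tan (i * π / n) - 1 / Real.tan (π / n)) =
      Real.sin ((1 - (i : ℝ)) * π / n) / Real.sin (i * π / n) := by
  have hnR : (3:ℝ) ≤ (n:ℝ) := by exact_mod_cast hn
  have hnpos : (0:ℝ) < n := by linarith
  have hpi := Real.pi_pos
  have ha1 : 0 < π / n := by positivity
  have ha2 : π / n < π / 2 := by
    rw [div_lt_div_iff₀ hnpos (by norm_num)]
    nlinarith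
  have hb1 : 0 < π / (2 * n) := by positivity
  have hb2 : π / (2 * n) < π / 2 := by
    rw [div_lt_div_iff₀ (by positivity) (by norm_num)]
    nlinarith
  have hca : 0 < Real.cos (π / n) := Real.cos_pos_of_mem_Ioo ⟨by linarith, ha2⟩
  have hcb : 0 < Real.cos (π / (2 * n)) := Real.cos_pos_of_mem_Ioo ⟨by linarith, hb2⟩
  have hsa : 0 < Real.sin (π / n) := Real.sin_pos_of_pos_of_lt_pi ha1 (by linarith)
  have hsb : 0 < Real.sin (π / (2 * n)) := Real.sin_pos_of_pos_of_lt_pi hb1 (by linarith)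
  have hiR : (1:ℝ) ≤ (i:ℝ) := by exact_mod_cast hi1
  have hiltn : (i:ℝ) < n := by
    have : i < n := lt_of_le_of_lt hi2 (by omega)
    exact_mod_cast this
  have hsφ : 0 < Real.sin (i * π / n) := by
    apply Real.sin_pos_of_pos_of_lt_pi
    · positivity
    · rw [div_lt_iff₀ hnpos]
      nlinarith
  have h2 : Real.sin (π / n) = 2 * Real.sin (π / (2 * n)) * Real.cos (π / (2 * n)) := by
    have : π / n = 2 * (π / (2 * n)) := by field_simp
    rw [this, Real.sin_two_mul]
  have h3 : Real.cos (π / n) = 2 * Real.cos (π / (2 * n)) ^ 2 - 1 := by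
    have : π / n = 2 * (π / (2 * n)) := by field_simp
    rw [this, Real.cos_two_mul]
  have hra : r = Real.sin (π / n) / 2 := by
    rw [hr, Real.tan_eq_sin_div_cos, Real.tan_eq_sin_div_cos]
    rw [div_sub_div _ _ (ne_of_gt hca) (ne_of_gt hcb)]
    have hnum : Real.sin (π / n) * Real.cos (π / (2 * n)) -
        Real.cos (π / n) * Real.sin (π / (2 * n)) = Real.sin (π / (2 * n)) := by
      rw [h2, h3]; ring
    rw [hnum]
    field_simp
  rw [hra, Real.tan_eq_sin_div_cos, Real.tan_eq_sin_div_cos, one_div_div, one_div_div,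
    show ((1:ℝ) - (i:ℝ)) * π / n = π / n - i * π / n by ring, Real.sin_sub]
  field_simp [hsφ.ne']
  rw [sub_div, mul_div_cancel_left₀ _ (by rw [mul_comm π]; exact hsφ.ne')]
end

section
/- Let n ≥ 5 be an odd integer and, for 1 ≤ i ≤ n−1, set v_i = sin((1−i)π/n)/sin(iπ/n). Then: (a) for every integer i with 1 ≤ i ≤ n−2, there exist a real 2×2 matrix M with det M = 1 and positive real numbers a, b such that M·(1, −v_i)ᵀ = (a, 0)ᵀ and M·(1, −v_{i+1})ᵀ = (0, b)ᵀ; and (b) there exist a real 2×2 matrix M with det M = 1 and positive reals a, b such that M·(1, −v_{n−1})ᵀ = (a, 0)ᵀ and M·(0, 1)ᵀ = (0, b)ᵀ. -/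
open Real

theorem stmt_2 (n : ℕ) (hn : 5 ≤ n) (hodd : Odd n)
    (v : ℕ → ℝ)
    (hv : ∀ i : ℕ, 1 ≤ i → i ≤ n - 1 →
      v i = Real.sin ((1 - (i : ℝ)) * π / n) / Real.sin (i * π / n)) :
    (∀ i : ℕ, 1 ≤ i → i ≤ n - 2 →
      ∃ (M : Matrix (Fin 2) (Fin 2) ℝ) (a b : ℝ), M.det = 1 ∧ 0 < a ∧ 0 < b ∧
        M.mulVec ![1, -v i] = ![a, 0] ∧ M.mulVec ![1, -v (i + 1)] = ![0, b]) ∧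
    (∃ (M : Matrix (Fin 2) (Fin 2) ℝ) (a b : ℝ), M.det = 1 ∧ 0 < a ∧ 0 < b ∧
      M.mulVec ![1, -v (n - 1)] = ![a, 0] ∧ M.mulVec ![0, 1] = ![0, b]) := by
  have hnR : (0:ℝ) < n := by
    have : 0 < n := by omega
    exact_mod_cast this
  constructor
  · intro i hi1 hi2
    have hvi := hv i hi1 (by omega)
    have hvi1 := hv (i+1) (by omega) (by omega)
    have hiR : (1:ℝ) ≤ (i:ℝ) := by exact_mod_cast hi1
    have hiRn : (i:ℝ) + 2 ≤ (n:ℝ) := by exact_mod_cast (show i + 2 ≤ n by omega)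
    have ht : 0 < Real.sin (π / n) := by
      apply Real.sin_pos_of_pos_of_lt_pi
      · positivity
      · rw [div_lt_iff₀ hnR]
        nlinarith [Real.pi_pos]
    have hs : 0 < Real.sin ((i:ℝ) * π / n) := by
      apply Real.sin_pos_of_pos_of_lt_pi
      · have : (0:ℝ) < (i:ℝ) := by linarith
        positivity
      · rw [div_lt_iff₀ hnR]
        nlinarith [Real.pi_pos]
    have hs3 : 0 < Real.sin (((i:ℝ) + 1) * π / n) := by
      apply Real.sin_pos_of_pos_of_lt_pi
      · have : (0:ℝ) < (i:ℝ) + 1 := by linarith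
        positivity
      · rw [div_lt_iff₀ hnR]
        nlinarith [Real.pi_pos]
    -- rewrite v i and v (i+1)
    have hargi : (1 - (i:ℝ)) * π / n = π / n - (i:ℝ) * π / n := by ring
    have hargi1 : (1 - ((i:ℝ) + 1)) * π / n = -((i:ℝ) * π / n) := by ring
    have hargi1' : ((i:ℝ) + 1) * π / n = (i:ℝ) * π / n + π / n := by ring
    rw [hargi, Real.sin_sub] at hvi
    have hvi1' : v (i+1) = -Real.sin ((i:ℝ) * π / n) / Real.sin ((i:ℝ) * π / n + π / n) := by
      rw [hvi1]
      push_cast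
      rw [hargi1, hargi1', Real.sin_neg]
    rw [hargi1'] at hs3
    set s := Real.sin ((i:ℝ) * π / n) with hs_def
    set c := Real.cos ((i:ℝ) * π / n) with hc_def
    set t := Real.sin (π / n) with ht_def
    set u := Real.cos (π / n) with hu_def
    set s3 := Real.sin ((i:ℝ) * π / n + π / n) with hs3_def
    have hs3e : s3 = s * u + c * t := by
      rw [hs3_def, Real.sin_add]
    -- Δ := v i - v (i+1) > 0
    have hΔ : 0 < v i - v (i + 1) := by
      rw [hvi, hvi1']
      rw [sub_eq_add_neg, ← neg_div, neg_neg]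
      rw [div_add_div _ _ (ne_of_gt hs) (ne_of_gt hs3)]
      apply div_pos
      · rw [hs3e]
        have hpy1 : s ^ 2 + c ^ 2 = 1 := Real.sin_sq_add_cos_sq _
        have hpy2 : t ^ 2 + u ^ 2 = 1 := Real.sin_sq_add_cos_sq _
        nlinarith [mul_pos ht ht]
      · exact mul_pos hs hs3
    set Δ := v i - v (i + 1) with hΔdef
    refine ⟨!![-v (i+1), -1; v i / Δ, 1 / Δ], Δ, 1, ?_, hΔ, one_pos, ?_, ?_⟩
    · rw [Matrix.det_fin_two_of]
      field_simp
      ring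
    · funext j
      fin_cases j <;>
        simp [Matrix.mulVec, dotProduct, Fin.sum_univ_two] <;>
        first
          | (field_simp; ring)
          | ring
          | rfl
    · funext j
      fin_cases j <;>
        simp [Matrix.mulVec, dotProduct, Fin.sum_univ_two] <;>
        first
          | (field_simp; ring)
          | ring
          | rfl
  · refine ⟨!![1, 0; v (n-1), 1], 1, 1, ?_, one_pos, one_pos, ?_, ?_⟩
    · rw [Matrix.det_fin_two_of]; ring
    · funext j
      fin_cases j <;>
        simp [Matrix.mulVec, dotProduct, Fin.sum_univ_two] <;> ring
    · funext j
      fin_cases j <;>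
        simp [Matrix.mulVec, dotProduct, Fin.sum_univ_two]
end

section
/- Let φ = (1+√5)/2 and define the matrices σ_0 = [[1, φ],[0, 1]], σ_1 = [[φ, φ],[1, φ]], σ_2 = [[φ, 1],[φ, φ]], σ_3 = [[1, 0],[φ, 1]], and the rational functions S_1(α) = (φα+1)/α, S_2(α) = (φα+φ)/(φα+1), S_3(α) = (α+φ)/(φα+φ), S_4(α) = 1/(α+φ). Then for every m ∈ {1,2,3,4} and all real numbers x > 0, y > 0, writing (u, w)ᵀ = σ_{m−1}·(x, y)ᵀ, one has w > 0 and u/w = S_m(y/x). -/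
theorem stmt_3 (φ : ℝ) (hφ : φ = (1 + Real.sqrt 5) / 2)
    (σ : Fin 4 → Matrix (Fin 2) (Fin 2) ℝ)
    (hσ0 : σ 0 = !![1, φ; 0, 1])
    (hσ1 : σ 1 = !![φ, φ; 1, φ])
    (hσ2 : σ 2 = !![φ, 1; φ, φ])
    (hσ3 : σ 3 = !![1, 0; φ, 1])
    (S : Fin 4 → ℝ → ℝ)
    (hS0 : ∀ α : ℝ, S 0 α = (φ * α + 1) / α)
    (hS1 : ∀ α : ℝ, S 1 α = (φ * α + φ) / (φ * α + 1))
    (hS2 : ∀ α : ℝ, S 2 α = (α + φ) / (φ * α + φ))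
    (hS3 : ∀ α : ℝ, S 3 α = 1 / (α + φ)) :
    ∀ (m : Fin 4) (x y : ℝ), 0 < x → 0 < y →
      0 < (σ m).mulVec ![x, y] 1 ∧
      (σ m).mulVec ![x, y] 0 / (σ m).mulVec ![x, y] 1 = S m (y / x) := by
  have hφpos : 0 < φ := by
    rw [hφ]; positivity
  intro m x y hx hy
  have hx' := hx.ne'
  have hy' := hy.ne'
  fin_cases m <;>
    simp [Fin.zero_eta, Fin.mk_one, Fin.reduceFinMk, hσ0, hσ1, hσ2, hσ3, hS0, hS1, hS2, hS3,
      Matrix.mulVec, dotProduct, Fin.sum_univ_two]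
  · constructor
    · nlinarith
    · field_simp; ring
  · constructor
    · nlinarith
    · have h1 : φ * x + φ * y > 0 := by nlinarith
      have h2 : φ * (y / x) + 1 > 0 := by positivity
      field_simp
      ring
  · constructor
    · nlinarith
    · have h2 : φ * (y / x) + φ > 0 := by positivity
      field_simp
      ring
  · constructor
    · nlinarith
    · have h2 : y / x + φ > 0 := by positivity
      field_simp
      ring
end

section
/- Let φ = (1+√5)/2, r = (1/4)·√((5−√5)/2), and for a complex number z with |z| = 1 and z ≠ −1 define f(z) = 2r·Im(z)/(1+Re(z)) − (1+√5)/4. Then for every complex z with |z| = 1, z ≠ −1, and z ≠ e^{3πi/5}, one has f(z) ≠ 0 and f(e^{2πi/5}·z)·f(z) = −φ·f(z) − 1. -/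
open Real Complex

lemma aux_pos_one_add_re (v : ℂ) (hv : ‖v‖ = 1) (hv1 : v ≠ -1) :
    0 < 1 + v.re := by
  have hn : v.re ^ 2 + v.im ^ 2 = 1 := by
    have := Complex.sq_norm v
    rw [hv, Complex.normSq_apply] at this
    nlinarith [this]
  have hre : -1 ≤ v.re := by nlinarith [sq_nonneg v.im]
  rcases lt_or_eq_of_le hre with h | h
  · linarith
  · exfalso
    apply hv1
    have him : v.im = 0 := by nlinarith
    apply Complex.ext <;> simp [← h, him]

set_option maxHeartbeats 2000000 in
theorem stmt_6 (φ r : ℝ) (hφ : φ = (1 + Real.sqrt 5) / 2)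
    (hr : r = (1 / 4) * Real.sqrt ((5 - Real.sqrt 5) / 2))
    (f : ℂ → ℝ)
    (hf : ∀ z : ℂ, ‖z‖ = 1 → z ≠ -1 →
      f z = 2 * r * z.im / (1 + z.re) - (1 + Real.sqrt 5) / 4) :
    ∀ z : ℂ, ‖z‖ = 1 → z ≠ -1 → z ≠ Complex.exp (3 * π * Complex.I / 5) →
      f z ≠ 0 ∧ f (Complex.exp (2 * π * Complex.I / 5) * z) * f z = -φ * f z - 1 := by
  intro z hz hz1 hz3
  set u : ℝ := Real.sqrt 5 with hu
  have hu0 : 0 < u := Real.sqrt_pos.mpr (by norm_num)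
  have hu2 : u ^ 2 = 5 := Real.sq_sqrt (by norm_num)
  have hu5 : u < 5 := by nlinarith
  -- trig values
  set s : ℝ := Real.sin (2 * π / 5) with hsdef
  have hc2 : Real.cos (2 * π / 5) = (u - 1) / 4 := by
    have h1 : (2 : ℝ) * π / 5 = 2 * (π / 5) := by ring
    rw [h1, Real.cos_two_mul, Real.cos_pi_div_five]
    linear_combination hu2 / 8
  have hs0 : 0 < s := by
    apply Real.sin_pos_of_pos_of_lt_pi
    · positivity
    · nlinarith [Real.pi_pos]
  have hs2 : s ^ 2 = (10 + 2 * u) / 16 := by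
    have hp := Real.sin_sq_add_cos_sq (2 * π / 5)
    rw [hc2] at hp
    linear_combination hp - hu2 / 16
  have hr0 : 0 < r := by
    rw [hr]
    have : (0:ℝ) < (5 - u) / 2 := by linarith
    positivity
  have hr2 : r ^ 2 = (5 - u) / 32 := by
    rw [hr, mul_pow, Real.sq_sqrt (by linarith : (0:ℝ) ≤ (5 - u) / 2)]
    ring
  have hrs : r * s = u / 8 := by
    have key : (r * s - u / 8) * (r * s + u / 8) = 0 := by
      linear_combination s ^ 2 * hr2 + (5 - u) / 32 * hs2 - 5 / 256 * hu2
    rcases mul_eq_zero.mp key with h | h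
    · linarith
    · linarith [mul_pos hr0 hs0]
  -- complex exponential facts
  have harg2 : (2 * (π:ℂ) * Complex.I / 5) = ((2 * π / 5 : ℝ) : ℂ) * Complex.I := by
    push_cast; ring
  have harg3 : (3 * (π:ℂ) * Complex.I / 5) = ((3 * π / 5 : ℝ) : ℂ) * Complex.I := by
    push_cast; ring
  have he2re : (Complex.exp (2 * π * Complex.I / 5)).re = (u - 1) / 4 := by
    rw [harg2, Complex.exp_ofReal_mul_I_re, hc2]
  have he2im : (Complex.exp (2 * π * Complex.I / 5)).im = s := by
    rw [harg2, Complex.exp_ofReal_mul_I_im]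
  have he3re : (Complex.exp (3 * π * Complex.I / 5)).re = (1 - u) / 4 := by
    rw [harg3, Complex.exp_ofReal_mul_I_re]
    have : (3 : ℝ) * π / 5 = π - 2 * π / 5 := by ring
    rw [this, Real.cos_pi_sub, hc2]; ring
  have he3im : (Complex.exp (3 * π * Complex.I / 5)).im = s := by
    rw [harg3, Complex.exp_ofReal_mul_I_im]
    have : (3 : ℝ) * π / 5 = π - 2 * π / 5 := by ring
    rw [this, Real.sin_pi_sub]
  -- basic facts about z
  have hab : z.re ^ 2 + z.im ^ 2 = 1 := by
    have := Complex.sq_norm z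
    rw [hz, Complex.normSq_apply] at this
    nlinarith [this]
  have hd1 : 0 < 1 + z.re := aux_pos_one_add_re z hz hz1
  set a : ℝ := z.re with hadef
  set b : ℝ := z.im with hbdef
  -- f z ≠ 0
  have hfz := hf z hz hz1
  have hfzne : f z ≠ 0 := by
    intro h0
    rw [hfz] at h0
    have heq : 2 * r * b = (1 + u) / 4 * (1 + a) := by
      have := sub_eq_zero.mp h0
      rw [div_eq_iff (ne_of_gt hd1)] at this
      linarith [this]
    have key2 : (1 + a) * (8 * a - 2 + 2 * u) = 0 := by
      linear_combination (-8) * (2 * r * b + (1 + u) / 4 * (1 + a)) * heq +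
        32 * r ^ 2 * hab - (1 + a) ^ 2 / 2 * hu2 + (32 - 32 * a ^ 2) * hr2
    have ha : a = (1 - u) / 4 := by
      rcases mul_eq_zero.mp key2 with h | h
      · linarith
      · linarith
    have h2rb : 0 < 2 * r * b := by
      rw [heq]
      exact mul_pos (by positivity) hd1
    have hb0 : 0 < b := by
      rcases mul_pos_iff.mp h2rb with ⟨_, h⟩ | ⟨h, _⟩
      · exact h
      · linarith
    have hbs : b = s := by
      have key3 : (b - s) * (b + s) = 0 := by
        linear_combination hab - (a + (1 - u) / 4) * ha - hs2 - 1 / 16 * hu2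
      rcases mul_eq_zero.mp key3 with h | h
      · linarith
      · linarith
    exact hz3 (Complex.ext (by rw [he3re, ← hadef, ha]) (by rw [he3im, ← hbdef, hbs]))
  refine ⟨hfzne, ?_⟩
  -- the rotated point
  set w : ℂ := Complex.exp (2 * π * Complex.I / 5) * z with hwdef
  have hwabs : ‖w‖ = 1 := by
    rw [hwdef, norm_mul, hz, harg2, Complex.norm_exp_ofReal_mul_I, one_mul]
  have hmul : Complex.exp (2 * π * Complex.I / 5) * Complex.exp (3 * π * Complex.I / 5) = -1 := by
    rw [← Complex.exp_add]
    have : 2 * (π:ℂ) * Complex.I / 5 + 3 * π * Complex.I / 5 = π * Complex.I := by ring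
    rw [this, Complex.exp_pi_mul_I]
  have hw1 : w ≠ -1 := by
    intro h
    apply hz3
    apply mul_left_cancel₀ (Complex.exp_ne_zero (2 * π * Complex.I / 5))
    rw [← hwdef, h, hmul]
  have hd2 : 0 < 1 + w.re := aux_pos_one_add_re w hwabs hw1
  have hwre : w.re = (u - 1) / 4 * a - s * b := by
    rw [hwdef, Complex.mul_re, he2re, he2im]
  have hwim : w.im = s * a + (u - 1) / 4 * b := by
    rw [hwdef, Complex.mul_im, he2re, he2im]; ring
  have hfw := hf w hwabs hw1
  rw [hfw, hfz, hφ, hwre, hwim]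
  rw [hwre] at hd2
  simp only [← hadef, ← hbdef]
  have hd1' : 1 + a ≠ 0 := hd1.ne'
  have hd2' : 1 + ((u - 1) / 4 * a - s * b) ≠ 0 := hd2.ne'
  have hd2'' : (4:ℝ) + ((u - 1) * a - 4 * (s * b)) ≠ 0 := by
    intro h; exact hd2.ne' (by linarith)
  have hd3 : (4:ℝ) - s * b * 4 - a + a * u ≠ 0 := by
    intro h; exact hd2.ne' (by linarith)
  have hd4 : (4:ℝ) + (a * (u - 1) - s * 4 * b) ≠ 0 := by
    intro h; exact hd2.ne' (by linarith)
  field_simp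
  rw [← sub_eq_zero]
  refine (mul_eq_zero.mp (?_ : (1+a) * _ = 0)).resolve_left hd1'
  linear_combination (1/4:ℝ) * ((-256*b^2 - 256*b^2*u - 256*a - 256*a*u + 2048*a*b*r - 256*a*b^2 - 256*a*b^2*u - 512*a^2 - 512*a^2*u + 2048*a^2*b*r - 256*a^3 - 256*a^3*u - 2048*r*b*(1+a)^2) * hrs + (-32*u - 32*u^2 - 512*r^2 + 512*r^2*u - 32*a*u - 32*a*u^2 - 512*a*r^2 + 512*a*r^2*u) * hab + (-80 + 32*b*s - 64*b*r - 152*a - 8*a*u + 64*a*b*s - 64*a*b*r - 64*a^2 - 16*a^2*u + 32*a^2*b*s + 8*a^3 - 8*a^3*u) * hu2 + (-512 + 512*u - 512*a + 512*a*u + 512*a^2 - 512*a^2*u + 512*a^3 - 512*a^3*u + 2048*s*b*(1+a)^2) * hr2)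
end

section
/- Let n ≥ 3 be an integer and, for 1 ≤ i ≤ n−1, set v_i = sin((1−i)π/n)/sin(iπ/n). Then for all integers i, j with 1 ≤ i < j ≤ n−1, one has v_j < v_i; that is, the sequence v_1 = 0 > v_2 > ⋯ > v_{n−1} is strictly decreasing. -/
open Real

lemma cot_strict_anti {a b : ℝ} (ha : 0 < a) (hab : a < b) (hb : b < π) :
    Real.cos b / Real.sin b < Real.cos a / Real.sin a := by
  have sa : 0 < Real.sin a := Real.sin_pos_of_pos_of_lt_pi ha (hab.trans hb)
  have sb : 0 < Real.sin b := Real.sin_pos_of_pos_of_lt_pi (ha.trans hab) hb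
  have hs : 0 < Real.sin (b - a) :=
    Real.sin_pos_of_pos_of_lt_pi (by linarith) (by linarith)
  rw [Real.sin_sub] at hs
  rw [div_lt_div_iff₀ sb sa]
  nlinarith

theorem stmt_11 (n : ℕ) (hn : 3 ≤ n)
    (v : ℕ → ℝ)
    (hv : ∀ i : ℕ, 1 ≤ i → i ≤ n - 1 →
      v i = Real.sin ((1 - (i : ℝ)) * π / n) / Real.sin (i * π / n)) :
    ∀ i j : ℕ, 1 ≤ i → i < j → j ≤ n - 1 → v j < v i := by
  intro i j hi hij hj
  have hnR : (3 : ℝ) ≤ (n : ℝ) := by exact_mod_cast hn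
  have hn0 : (0 : ℝ) < n := by linarith
  set θ := π / n with hθdef
  have hθ : 0 < θ := div_pos Real.pi_pos hn0
  have hθπ : θ < π := by
    rw [hθdef, div_lt_iff₀ hn0]
    nlinarith [Real.pi_pos]
  have hsθ : 0 < Real.sin θ := Real.sin_pos_of_pos_of_lt_pi hθ hθπ
  have key : ∀ k : ℕ, 1 ≤ k → k ≤ n - 1 →
      v k = Real.sin θ * (Real.cos (k * θ) / Real.sin (k * θ)) - Real.cos θ := by
    intro k hk1 hk2
    have hkn : (k : ℝ) < n := by
      have : k < n := by omega
      exact_mod_cast this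
    have hk0 : (1 : ℝ) ≤ (k : ℝ) := by exact_mod_cast hk1
    have hkθ0 : 0 < (k : ℝ) * θ := by nlinarith
    have hkθπ : (k : ℝ) * θ < π := by
      rw [hθdef]
      rw [mul_div_assoc'] at *
      rw [div_lt_iff₀ hn0]
      nlinarith [Real.pi_pos]
    have hsk : 0 < Real.sin ((k : ℝ) * θ) := Real.sin_pos_of_pos_of_lt_pi hkθ0 hkθπ
    rw [hv k hk1 hk2]
    have h1 : (1 - (k : ℝ)) * π / n = θ - (k : ℝ) * θ := by
      rw [hθdef]; ring
    have h2 : (k : ℝ) * π / n = (k : ℝ) * θ := by rw [hθdef]; ring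
    rw [h1, h2, Real.sin_sub]
    field_simp
  have hiθlt : (i : ℝ) * θ < (j : ℝ) * θ := by
    have : (i : ℝ) < j := by exact_mod_cast hij
    nlinarith
  have hi0 : 0 < (i : ℝ) * θ := by
    have : (1 : ℝ) ≤ (i : ℝ) := by exact_mod_cast hi
    nlinarith
  have hjπ : (j : ℝ) * θ < π := by
    have hjn : (j : ℝ) < n := by
      have : j < n := by omega
      exact_mod_cast this
    rw [hθdef, mul_div_assoc', div_lt_iff₀ hn0]
    nlinarith [Real.pi_pos]
  have hi' : i ≤ n - 1 := le_of_lt (lt_of_lt_of_le hij hj)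
  rw [key i hi hi', key j (le_of_lt (lt_of_le_of_lt hi hij)) hj]
  have := cot_strict_anti hi0 hiθlt hjπ
  nlinarith
end

section
/- Let n ≥ 3 be an odd integer. Then for every integer i with 1 ≤ i ≤ n−1, (tan(π/(2n))/(tan(π/n) − tan(π/(2n)))) · (tan(π/n)/tan(iπ/n) − 1) = −(tan((i−1)π/n)/(tan(π/n) + tan((i−1)π/n))) · (tan(π/n)/tan(π/(2n)) − 1). -/
open Real

lemma cos_ne_aux (n m : ℕ) (hn : 0 < n) (hodd : Odd n) : Real.cos ((m:ℝ) * π / n) ≠ 0 := by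
  intro hc
  rw [Real.cos_eq_zero_iff] at hc
  obtain ⟨k, hk⟩ := hc
  have hn' : (n:ℝ) ≠ 0 := by positivity
  have h2 : (2*m : ℝ) = (2*k+1) * n := by
    field_simp at hk
    nlinarith [hk, Real.pi_pos]
  have h3 : (2*m : ℤ) = (2*k+1) * n := by exact_mod_cast h2
  have hodd' : Odd ((2*k+1) * (n:ℤ)) := (odd_two_mul_add_one k).mul (by exact_mod_cast hodd)
  rw [← h3] at hodd'
  exact (Int.not_odd_iff_even.mpr ⟨m, by ring⟩) hodd'

lemma aux_stmt13 (s c u v : ℝ) (hs : s ≠ 0) (hc : c ≠ 0) (hv : v ≠ 0)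
    (hc2 : 2*c^2 - 1 ≠ 0)
    (hD1 : 2*s*c*v + (2*c^2-1)*u ≠ 0)
    (hD2 : (2*c^2-1)*v - 2*s*c*u ≠ 0)
    (hpyth : s^2 + c^2 = 1) :
    (s/c) / (2*s*c/(2*c^2-1) - s/c) * ((2*s*c/(2*c^2-1)) / ((2*s*c*v + (2*c^2-1)*u)/((2*c^2-1)*v - 2*s*c*u)) - 1)
      = -((u/v) / (2*s*c/(2*c^2-1) + u/v)) * ((2*s*c/(2*c^2-1)) / (s/c) - 1) := by
  have hden1 : 2*s*c*c - (2*c^2-1)*s ≠ 0 := by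
    intro h; apply hs; nlinarith [h]
  rw [div_sub_div _ _ hc2 hc, div_add_div _ _ hc2 hv]
  field_simp
  have hc2' : c^2*2-1 ≠ 0 := by intro h; apply hc2; linarith
  have hD1' : s * c * 2 * v + (c ^ 2 * 2 - 1) * u ≠ 0 := by intro h; apply hD1; linarith
  rw [div_sub_one (mul_ne_zero hc2' hD1'), div_sub_one hc2']
  field_simp
  have hD1'' : c * 2 * s * v + (c ^ 2 * 2 - 1) * u ≠ 0 := by intro h; apply hD1; linarith
  rw [neg_div', div_left_inj' hD1'']
  linear_combination (-4*c^2*u) * hpyth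

theorem stmt_13 (n : ℕ) (hn : 3 ≤ n) (hodd : Odd n) :
    ∀ i : ℕ, 1 ≤ i → i ≤ n - 1 →
      (Real.tan (π / (2 * n)) / (Real.tan (π / n) - Real.tan (π / (2 * n)))) *
          (Real.tan (π / n) / Real.tan (i * π / n) - 1) =
        -(Real.tan (((i : ℝ) - 1) * π / n) /
            (Real.tan (π / n) + Real.tan (((i : ℝ) - 1) * π / n))) *
          (Real.tan (π / n) / Real.tan (π / (2 * n)) - 1) := by
  intro i hi1 hi2
  have hπ := Real.pi_pos
  have hn0 : (0:ℝ) < n := by exact_mod_cast Nat.lt_of_lt_of_le (by norm_num) hn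
  have hnR : (3:ℝ) ≤ n := by exact_mod_cast hn
  have hiR : (1:ℝ) ≤ i := by exact_mod_cast hi1
  have hiR2 : (i:ℝ) + 1 ≤ n := by
    have : i + 1 ≤ n := by omega
    exact_mod_cast this
  have hi1' : ((i:ℝ) - 1) = ((i-1 : ℕ) : ℝ) := by
    have := Nat.cast_sub hi1 (R := ℝ); push_cast at this ⊢; linarith
  set s := Real.sin (π/(2*n)) with hsdef
  set c := Real.cos (π/(2*n)) with hcdef
  set u := Real.sin (((i:ℝ)-1) * π / n) with hudef
  set v := Real.cos (((i:ℝ)-1) * π / n) with hvdef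
  have ha0 : 0 < π / (2*n) := by positivity
  have ha2 : π / (2*n) < π/2 := by
    rw [div_lt_div_iff₀ (by positivity) (by norm_num)]
    nlinarith
  have hc : c ≠ 0 := ne_of_gt (Real.cos_pos_of_mem_Ioo ⟨by linarith, ha2⟩)
  have hs : s ≠ 0 := ne_of_gt (Real.sin_pos_of_pos_of_lt_pi ha0 (by linarith))
  have hv : v ≠ 0 := by
    rw [hvdef, hi1']; exact cos_ne_aux n (i-1) (by omega) hodd
  have hpyth : s^2 + c^2 = 1 := Real.sin_sq_add_cos_sq _
  -- expansions
  have e1 : Real.sin (π/n) = 2 * s * c := by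
    rw [show π/n = 2*(π/(2*n)) by field_simp, Real.sin_two_mul]
  have e2 : Real.cos (π/n) = 2 * c^2 - 1 := by
    rw [show π/n = 2*(π/(2*n)) by field_simp, Real.cos_two_mul]
  have e3 : Real.sin ((i:ℝ) * π / n) = 2*s*c*v + (2*c^2-1)*u := by
    rw [show (i:ℝ) * π / n = π/n + ((i:ℝ)-1) * π / n by field_simp; ring,
      Real.sin_add, e1, e2]
  have e4 : Real.cos ((i:ℝ) * π / n) = (2*c^2-1)*v - 2*s*c*u := by
    rw [show (i:ℝ) * π / n = π/n + ((i:ℝ)-1) * π / n by field_simp; ring,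
      Real.cos_add, e1, e2]
  have hc2 : 2*c^2 - 1 ≠ 0 := by
    rw [← e2]
    have hb0 : 0 < π/n := by positivity
    refine ne_of_gt (Real.cos_pos_of_mem_Ioo ⟨by linarith, ?_⟩)
    rw [div_lt_div_iff₀ (by positivity) (by norm_num)]
    nlinarith
  have hD1 : 2*s*c*v + (2*c^2-1)*u ≠ 0 := by
    rw [← e3]
    refine ne_of_gt (Real.sin_pos_of_pos_of_lt_pi (by positivity) ?_)
    rw [div_lt_iff₀ hn0]
    nlinarith
  have hD2 : (2*c^2-1)*v - 2*s*c*u ≠ 0 := by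
    rw [← e4]; exact cos_ne_aux n i (by omega) hodd
  have ht1 : Real.tan (π/(2*n)) = s/c := Real.tan_eq_sin_div_cos _
  have ht2 : Real.tan (π/n) = 2*s*c/(2*c^2-1) := by
    rw [Real.tan_eq_sin_div_cos, e1, e2]
  have ht3 : Real.tan ((i:ℝ) * π / n) = (2*s*c*v + (2*c^2-1)*u)/((2*c^2-1)*v - 2*s*c*u) := by
    rw [Real.tan_eq_sin_div_cos, e3, e4]
  have ht4 : Real.tan (((i:ℝ)-1) * π / n) = u/v := Real.tan_eq_sin_div_cos _
  rw [ht1, ht2, ht3, ht4]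
  exact aux_stmt13 s c u v hs hc hv hc2 hD1 hD2 hpyth
end

section
/- Define a sequence of polynomials over ℝ by P_0(x) = 1, P_1(x) = x − 1, and P_k(x) = x·P_{k−1}(x) − P_{k−2}(x) for k ≥ 2. Then for every integer m ≥ 1, P_m(2·cos(π/(2m+1))) = 0. -/
open Real Polynomial

theorem stmt_14 (P : ℕ → Polynomial ℝ)
    (hP0 : P 0 = 1) (hP1 : P 1 = X - 1)
    (hPk : ∀ k : ℕ, 2 ≤ k → P k = X * P (k - 1) - P (k - 2)) :
    ∀ m : ℕ, 1 ≤ m → (P m).eval (2 * Real.cos (π / (2 * m + 1))) = 0 := by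
  intro m hm
  set θ : ℝ := π / (2 * m + 1) with hθ
  have hden : (0:ℝ) < 2 * m + 1 := by positivity
  have hθpos : 0 < θ := div_pos Real.pi_pos hden
  have hθlt : θ < π := by
    rw [hθ, div_lt_iff₀ hden]
    nlinarith [Real.pi_pos, (Nat.one_le_cast (α := ℝ)).2 hm]
  have hsin : Real.sin θ ≠ 0 := ne_of_gt (Real.sin_pos_of_pos_of_lt_pi hθpos hθlt)
  have key : ∀ k : ℕ, Real.sin θ * (P k).eval (2 * Real.cos θ) =
      Real.sin ((k + 1) * θ) - Real.sin (k * θ) := by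
    intro k
    induction k using Nat.strong_induction_on with
    | _ k ih =>
      match k with
      | 0 => simp [hP0]
      | 1 =>
        simp only [hP1, eval_sub, eval_X, eval_one]
        push_cast
        rw [show ((1:ℝ) + 1) * θ = 2 * θ by ring, Real.sin_two_mul]
        ring
      | (k + 2) =>
        have hrec := hPk (k + 2) (by omega)
        simp only [Nat.add_sub_cancel, show k + 2 - 1 = k + 1 from rfl] at hrec
        rw [hrec, eval_sub, eval_mul, eval_X, mul_sub]
        have h1 := ih (k + 1) (by omega)
        have h2 := ih k (by omega)
        rw [mul_left_comm, h1, h2]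
        push_cast
        set a : ℝ := ((k : ℝ) + 1) * θ with ha
        have e1 : ((k : ℝ) + 1 + 1) * θ = a + θ := by rw [ha]; ring
        have e2 : ((k : ℝ) + 2 + 1) * θ = a + 2 * θ := by rw [ha]; ring
        have e3 : ((k : ℝ) + 2) * θ = a + θ := by rw [ha]; ring
        have e4 : (k : ℝ) * θ = a - θ := by rw [ha]; ring
        rw [e1, e2, e3, e4, Real.sin_sub, Real.sin_add,
          show a + 2 * θ = (a + θ) + θ by ring, Real.sin_add, Real.cos_add,
          Real.sin_add]
        linear_combination Real.sin a * Real.sin_sq_add_cos_sq θ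
  have hmθ : ((m : ℝ) + 1) * θ = π - (m : ℝ) * θ := by
    have : ((2 * m : ℝ) + 1) * θ = π := by
      rw [hθ]
      field_simp
    nlinarith [this]
  have := key m
  rw [hmθ, Real.sin_pi_sub, sub_self] at this
  exact (mul_eq_zero.mp this).resolve_left hsin
end
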